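/- Let q ≥ 1. There exists a constant c_q ≥ 2 depending only on q such that for every g ∈ H¹ with r^{q−1}g ∈ L² that is localized to the angular frequency band k for some integer k ≥ 1, and for every σ > 0, (1/c_q) σ^{1/q} ‖r^{q−2} g‖² ≤ σ ‖∇g‖² + ‖r^{q−1} g‖². -/

import Mathlib

open MeasureTheory Real Set

noncomputable section

/-- Integration domain `(0,∞) × (0,2π]` in the `(r,θ)` plane. -/
def domRT : Set (ℝ × ℝ) := (Set.Ioi (0:ℝ)) ×ˢ (Set.Ioc (0:ℝ) (2*π))

/-- Squared `L²` norm with respect to the measure `r dr dθ`. -/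
def nrm2 (g : ℝ → ℝ → ℝ) : ℝ := ∫ p in domRT, (g p.1 p.2)^2 * p.1

/-- Inner product with respect to the measure `r dr dθ`. -/
def inr2 (g h : ℝ → ℝ → ℝ) : ℝ := ∫ p in domRT, g p.1 p.2 * h p.1 p.2 * p.1

/-- Radial partial derivative. -/
def pdr (g : ℝ → ℝ → ℝ) : ℝ → ℝ → ℝ := fun r θ => deriv (fun x => g x θ) r

/-- Angular partial derivative. -/
def pdt (g : ℝ → ℝ → ℝ) : ℝ → ℝ → ℝ := fun r θ => deriv (fun x => g r x) θ

/-- Squared `L²` norm of the polar gradient `∇g = (∂_r g, r⁻¹ ∂_θ g)`. -/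
def gnrm2 (g : ℝ → ℝ → ℝ) : ℝ := nrm2 (pdr g) + nrm2 (fun r θ => pdt g r θ / r)

/-- Polar Laplacian `Δg = ∂_rr g + r⁻¹ ∂_r g + r⁻² ∂_θθ g`. -/
def plap (g : ℝ → ℝ → ℝ) : ℝ → ℝ → ℝ :=
  fun r θ => pdr (pdr g) r θ + pdr g r θ / r + pdt (pdt g) r θ / r^2

/-- Weighted inequality controlling the behavior at the origin: for `q ≥ 1` there is a
constant `c_q ≥ 2`, depending only on `q`, such that for every `g ∈ H¹` with
`r^{q−1}g ∈ L²` localized to an angular frequency band `k ≥ 1` and every `σ > 0`,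
`(1/c_q) σ^{1/q} ‖r^{q−2}g‖² ≤ σ‖∇g‖² + ‖r^{q−1}g‖²`. -/
lemma measurable_rpow_const (e : ℝ) : Measurable fun p : ℝ×ℝ => p.1 ^ e := by
  measurability

lemma trig_int (k : ℕ) (hk : 1 ≤ k) (a b : ℝ) :
    ∫ θ in Set.Ioc (0:ℝ) (2*π), (a * Real.cos (k*θ) + b * Real.sin (k*θ))^2
      = ∫ θ in Set.Ioc (0:ℝ) (2*π), (b * Real.cos (k*θ) - a * Real.sin (k*θ))^2 := by
  have hπ : (0:ℝ) ≤ 2*π := by positivity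
  rw [← intervalIntegral.integral_of_le hπ, ← intervalIntegral.integral_of_le hπ]
  have hk0 : (k:ℝ) ≠ 0 := by positivity
  have h : ∀ θ : ℝ, HasDerivAt
      (fun θ : ℝ => (a^2-b^2) * Real.sin (2*k*θ)/(2*k) - a*b*Real.cos (2*k*θ)/k)
      ((a^2-b^2) * Real.cos (2*k*θ) + 2*a*b*Real.sin (2*k*θ)) θ := by
    intro θ
    have hkθ : HasDerivAt (fun θ : ℝ => 2*(k:ℝ)*θ) (2*k) θ := by
      simpa using (hasDerivAt_id θ).const_mul (2*(k:ℝ))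
    have h1 := (Real.hasDerivAt_sin (2*(k:ℝ)*θ)).comp θ hkθ
    have h2 := (Real.hasDerivAt_cos (2*(k:ℝ)*θ)).comp θ hkθ
    have := ((h1.const_mul (a^2-b^2)).div_const (2*(k:ℝ))).sub ((h2.const_mul (a*b)).div_const (k:ℝ))
    refine this.congr_deriv ?_
    field_simp
    ring
  have key : ∀ θ : ℝ, (a^2-b^2) * Real.cos (2*(k:ℝ)*θ) + 2*a*b*Real.sin (2*(k:ℝ)*θ)
      = (a * Real.cos (k*θ) + b * Real.sin (k*θ))^2 - (b * Real.cos (k*θ) - a * Real.sin (k*θ))^2 := by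
    intro θ
    rw [mul_assoc, Real.cos_two_mul, Real.sin_two_mul]
    linear_combination (a^2-b^2) * Real.sin_sq_add_cos_sq ((k:ℝ)*θ)
  have hFTC := intervalIntegral.integral_eq_sub_of_hasDerivAt (a := (0:ℝ)) (b := 2*π)
      (f := fun θ : ℝ => (a^2-b^2) * Real.sin (2*k*θ)/(2*k) - a*b*Real.cos (2*k*θ)/k)
      (fun θ _ => h θ) (by apply Continuous.intervalIntegrable; fun_prop)
  have hsin : Real.sin (2*(k:ℝ)*(2*π)) = 0 := by
    have : 2*(k:ℝ)*(2*π) = ((4*k : ℕ) : ℝ) * π := by push_cast; ring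
    rw [this, Real.sin_nat_mul_pi]
  have hcos : Real.cos (2*(k:ℝ)*(2*π)) = 1 := by
    have : 2*(k:ℝ)*(2*π) = ((2*k : ℕ) : ℝ) * (2*π) := by push_cast; ring
    rw [this, Real.cos_nat_mul_two_pi]
  have hzero : (∫ θ in (0:ℝ)..(2*π), ((a * Real.cos (k*θ) + b * Real.sin (k*θ))^2
      - (b * Real.cos (k*θ) - a * Real.sin (k*θ))^2)) = 0 := by
    calc (∫ θ in (0:ℝ)..(2*π), ((a * Real.cos (k*θ) + b * Real.sin (k*θ))^2
      - (b * Real.cos (k*θ) - a * Real.sin (k*θ))^2))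
        = ∫ θ in (0:ℝ)..(2*π), ((a^2-b^2) * Real.cos (2*k*θ) + 2*a*b*Real.sin (2*k*θ)) := by
          congr 1; funext θ; rw [key θ]
      _ = 0 := by rw [hFTC]; simp [hsin, hcos]
  have hi1 : IntervalIntegrable (fun θ : ℝ => (a * Real.cos (k*θ) + b * Real.sin (k*θ))^2)
      volume 0 (2*π) := by apply Continuous.intervalIntegrable; fun_prop
  have hi2 : IntervalIntegrable (fun θ : ℝ => (b * Real.cos (k*θ) - a * Real.sin (k*θ))^2)
      volume 0 (2*π) := by apply Continuous.intervalIntegrable; fun_prop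
  have := intervalIntegral.integral_sub hi1 hi2
  rw [hzero] at this
  linarith [this]

lemma pdt_formula (g : ℝ → ℝ → ℝ) (k : ℕ) (a b : ℝ → ℝ)
    (hg : ∀ r θ, g r θ = a r * Real.cos (k*θ) + b r * Real.sin (k*θ)) :
    ∀ r θ, pdt g r θ = (k:ℝ) * (b r * Real.cos (k*θ) - a r * Real.sin (k*θ)) := by
  intro r θ
  have hfe : (fun x => g r x) = fun x => a r * Real.cos (k*x) + b r * Real.sin (k*x) :=
    funext (hg r)
  have hkθ : HasDerivAt (fun x : ℝ => (k:ℝ)*x) (k:ℝ) θ := by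
    simpa using (hasDerivAt_id θ).const_mul (k:ℝ)
  have h1 := ((Real.hasDerivAt_cos ((k:ℝ)*θ)).comp θ hkθ).const_mul (a r)
  have h2 := ((Real.hasDerivAt_sin ((k:ℝ)*θ)).comp θ hkθ).const_mul (b r)
  have hd : HasDerivAt (fun x => a r * Real.cos (k*x) + b r * Real.sin (k*x))
      ((k:ℝ) * (b r * Real.cos (k*θ) - a r * Real.sin (k*θ))) θ := by
    refine (h1.add h2).congr_deriv ?_
    ring
  rw [pdt, hfe, hd.deriv]

/-- Young-type pointwise inequality. -/
lemma young_pt (q σ r G : ℝ) (hq : 1 ≤ q) (hσ : 0 < σ) (hr : 0 < r) :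
    σ^(1/q) * ((r ^ (q-2) * G)^2 * r) ≤ σ * ((G / r)^2 * r) + (r ^ (q-1) * G)^2 * r := by
  have hq0 : (0:ℝ) < q := lt_of_lt_of_le one_pos hq
  have hw1 : (0:ℝ) ≤ 1/q := by positivity
  have hw2 : (0:ℝ) ≤ 1 - 1/q := by
    have : 1/q ≤ 1 := by rw [div_le_one hq0]; exact hq
    linarith
  have hp1 : (0:ℝ) ≤ σ * r^(-2:ℝ) := by positivity
  have hp2 : (0:ℝ) ≤ r^(2*q-2) := by positivity
  have hgm := Real.geom_mean_le_arith_mean2_weighted hw1 hw2 hp1 hp2 (by field_simp; ring)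
  have hL : (σ * r^(-2:ℝ))^(1/q) * (r^(2*q-2))^(1-1/q) = σ^(1/q) * r^(2*q-4) := by
    have hexp : (-2:ℝ)*(1/q) + (2*q-2)*(1-1/q) = 2*q-4 := by
      field_simp
      ring
    rw [Real.mul_rpow hσ.le (by positivity), ← Real.rpow_mul hr.le, ← Real.rpow_mul hr.le,
      mul_assoc, ← Real.rpow_add hr, hexp]
  rw [hL] at hgm
  have base : σ^(1/q) * r^(2*q-4) ≤ σ * r^(-2:ℝ) + r^(2*q-2) := by
    have h1q : 1/q ≤ 1 := by rw [div_le_one hq0]; exact hq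
    nlinarith [hgm, hp1, hp2]
  have e1 : (r^(q-2))^2 = r^(2*q-4) := by
    rw [← Real.rpow_natCast (r^(q-2)) 2, ← Real.rpow_mul hr.le]
    congr 1
    push_cast
    ring
  have e2 : (r^(q-1))^2 = r^(2*q-2) := by
    rw [← Real.rpow_natCast (r^(q-1)) 2, ← Real.rpow_mul hr.le]
    congr 1
    push_cast
    ring
  have e3 : (G/r)^2 * r = G^2 * r^(-2:ℝ) * r := by
    have : r^(-2:ℝ) = (r^(2:ℕ))⁻¹ := by
      rw [← Real.rpow_natCast r 2, ← Real.rpow_neg hr.le]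
      norm_num
    rw [this]
    field_simp
  calc σ^(1/q) * ((r ^ (q-2) * G)^2 * r) = (σ^(1/q) * r^(2*q-4)) * (G^2*r) := by
        rw [mul_pow, e1]; ring
    _ ≤ (σ * r^(-2:ℝ) + r^(2*q-2)) * (G^2*r) :=
        mul_le_mul_of_nonneg_right base (by positivity)
    _ = σ * ((G / r)^2 * r) + (r ^ (q-1) * G)^2 * r := by
        rw [mul_pow, e2, e3]; ring


lemma inner_cmp (g : ℝ → ℝ → ℝ) (k : ℕ) (hk : 1 ≤ k) (a b : ℝ → ℝ)
    (hg : ∀ r θ, g r θ = a r * Real.cos (k*θ) + b r * Real.sin (k*θ))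
    (hgcont : Continuous fun p : ℝ×ℝ => g p.1 p.2)
    (r : ℝ) (hr : 0 < r) :
    ∫⁻ θ in Set.Ioc (0:ℝ) (2*π), ENNReal.ofReal ((g r θ / r)^2 * r)
      ≤ ∫⁻ θ in Set.Ioc (0:ℝ) (2*π), ENNReal.ofReal ((pdt g r θ / r)^2 * r) := by
  have hpdt := pdt_formula g k a b hg
  have hgr : Continuous fun θ => g r θ :=
    hgcont.comp (continuous_const.prodMk continuous_id)
  have hc1 : Continuous fun θ => (g r θ / r)^2 * r := by fun_prop
  have hc2 : Continuous fun θ : ℝ => (pdt g r θ / r)^2 * r := by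
    rw [show (fun θ : ℝ => (pdt g r θ / r)^2 * r)
        = fun θ => (((k:ℝ)*(b r * Real.cos (k*θ) - a r * Real.sin (k*θ)))/r)^2 * r
      from funext fun θ => by rw [hpdt r θ]]
    fun_prop
  have hint1 : IntegrableOn (fun θ => (g r θ / r)^2 * r) (Set.Ioc (0:ℝ) (2*π)) volume :=
    hc1.integrableOn_Ioc
  have hint2 : IntegrableOn (fun θ : ℝ => (pdt g r θ / r)^2 * r) (Set.Ioc (0:ℝ) (2*π)) volume :=
    hc2.integrableOn_Ioc
  have hnn : ∀ x : ℝ, (0:ℝ) ≤ x^2 * r := fun x => by positivity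
  rw [← ofReal_integral_eq_lintegral_ofReal hint1
      (Filter.Eventually.of_forall fun θ => by positivity),
    ← ofReal_integral_eq_lintegral_ofReal hint2
      (Filter.Eventually.of_forall fun θ => by positivity)]
  apply ENNReal.ofReal_le_ofReal
  have hsq : ∀ x : ℝ, (x/r)^2 * r = x^2 * r⁻¹ := fun x => by
    field_simp
  have hT : (0:ℝ) ≤ ∫ θ in Set.Ioc (0:ℝ) (2*π),
      (b r * Real.cos (k*θ) - a r * Real.sin (k*θ))^2 :=
    setIntegral_nonneg measurableSet_Ioc (fun θ _ => sq_nonneg _)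
  have hk1 : (1:ℝ) ≤ (k:ℝ) := by exact_mod_cast hk
  have hk2 : (1:ℝ) ≤ (k:ℝ)^2 := by nlinarith
  calc (∫ θ in Set.Ioc (0:ℝ) (2*π), (g r θ / r)^2 * r)
      = (∫ θ in Set.Ioc (0:ℝ) (2*π),
          (a r * Real.cos (k*θ) + b r * Real.sin (k*θ))^2) * r⁻¹ := by
        rw [← integral_mul_const]
        congr 1
        funext θ
        rw [hg r θ, hsq _]
    _ = (∫ θ in Set.Ioc (0:ℝ) (2*π),
          (b r * Real.cos (k*θ) - a r * Real.sin (k*θ))^2) * r⁻¹ := by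
        rw [trig_int k hk (a r) (b r)]
    _ ≤ (k:ℝ)^2 * ((∫ θ in Set.Ioc (0:ℝ) (2*π),
          (b r * Real.cos (k*θ) - a r * Real.sin (k*θ))^2) * r⁻¹) := by
        have hP : (0:ℝ) ≤ (∫ θ in Set.Ioc (0:ℝ) (2*π),
            (b r * Real.cos (k*θ) - a r * Real.sin (k*θ))^2) * r⁻¹ :=
          mul_nonneg hT (inv_nonneg.mpr hr.le)
        nlinarith [mul_nonneg (sub_nonneg.mpr hk2) hP]
    _ = ∫ θ in Set.Ioc (0:ℝ) (2*π), (pdt g r θ / r)^2 * r := by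
        rw [show (fun θ : ℝ => (pdt g r θ / r)^2 * r)
            = fun θ => (k:ℝ)^2 * ((b r * Real.cos (k*θ) - a r * Real.sin (k*θ))^2 * r⁻¹)
          from funext fun θ => by rw [hpdt r θ]; field_simp]
        rw [MeasureTheory.integral_const_mul, integral_mul_const]

lemma fubini_cmp (g : ℝ → ℝ → ℝ) (k : ℕ) (hk : 1 ≤ k) (a b : ℝ → ℝ)
    (hg : ∀ r θ, g r θ = a r * Real.cos (k*θ) + b r * Real.sin (k*θ))
    (hgcont : Continuous fun p : ℝ×ℝ => g p.1 p.2)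
    (hacont : Continuous a) (hbcont : Continuous b) :
    ∫⁻ p in domRT, ENNReal.ofReal ((g p.1 p.2 / p.1)^2 * p.1)
      ≤ ∫⁻ p in domRT, ENNReal.ofReal ((pdt g p.1 p.2 / p.1)^2 * p.1) := by
  have hpdt := pdt_formula g k a b hg
  have mg : Measurable fun p : ℝ×ℝ => g p.1 p.2 := hgcont.measurable
  have m2 : Measurable fun p : ℝ×ℝ => ENNReal.ofReal ((g p.1 p.2 / p.1)^2 * p.1) :=
    (((mg.div measurable_fst).pow_const 2).mul measurable_fst).ennreal_ofReal
  have hpdtc : Continuous fun p : ℝ×ℝ => pdt g p.1 p.2 := by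
    rw [show (fun p : ℝ×ℝ => pdt g p.1 p.2)
        = fun p => (k:ℝ) * (b p.1 * Real.cos (k*p.2) - a p.1 * Real.sin (k*p.2))
      from funext fun p => hpdt p.1 p.2]
    fun_prop
  have m3 : Measurable fun p : ℝ×ℝ => ENNReal.ofReal ((pdt g p.1 p.2 / p.1)^2 * p.1) :=
    (((hpdtc.measurable.div measurable_fst).pow_const 2).mul measurable_fst).ennreal_ofReal
  have hmeas : (volume : Measure (ℝ×ℝ)).restrict domRT
      = ((volume : Measure ℝ).restrict (Set.Ioi 0)).prod
        ((volume : Measure ℝ).restrict (Set.Ioc 0 (2*π))) := by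
    rw [domRT, Measure.prod_restrict, ← Measure.volume_eq_prod]
  rw [show (∫⁻ p in domRT, ENNReal.ofReal ((g p.1 p.2 / p.1)^2 * p.1))
      = ∫⁻ p, ENNReal.ofReal ((g p.1 p.2 / p.1)^2 * p.1)
        ∂(((volume : Measure ℝ).restrict (Set.Ioi 0)).prod
          ((volume : Measure ℝ).restrict (Set.Ioc 0 (2*π)))) from by rw [← hmeas],
    show (∫⁻ p in domRT, ENNReal.ofReal ((pdt g p.1 p.2 / p.1)^2 * p.1))
      = ∫⁻ p, ENNReal.ofReal ((pdt g p.1 p.2 / p.1)^2 * p.1)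
        ∂(((volume : Measure ℝ).restrict (Set.Ioi 0)).prod
          ((volume : Measure ℝ).restrict (Set.Ioc 0 (2*π)))) from by rw [← hmeas]]
  rw [lintegral_prod _ m2.aemeasurable, lintegral_prod _ m3.aemeasurable]
  apply lintegral_mono_ae
  filter_upwards [ae_restrict_mem measurableSet_Ioi] with r hr
  exact inner_cmp g k hk a b hg hgcont r hr



theorem weighted_origin_inequality (q : ℝ) (hq : 1 ≤ q) :
    ∃ c : ℝ, 2 ≤ c ∧
      ∀ (k : ℕ), 1 ≤ k →
      ∀ g : ℝ → ℝ → ℝ,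
        ContDiff ℝ 1 (fun p : ℝ × ℝ => g p.1 p.2) →
        (∃ a b : ℝ → ℝ, ∀ r θ,
          g r θ = a r * Real.cos (k * θ) + b r * Real.sin (k * θ)) →
        IntegrableOn (fun p : ℝ × ℝ => (g p.1 p.2)^2 * p.1) domRT →
        IntegrableOn (fun p : ℝ × ℝ => (pdr g p.1 p.2)^2 * p.1) domRT →
        IntegrableOn (fun p : ℝ × ℝ => (pdt g p.1 p.2 / p.1)^2 * p.1) domRT →
        IntegrableOn (fun p : ℝ × ℝ => (p.1 ^ (q-1) * g p.1 p.2)^2 * p.1) domRT →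
        ∀ σ : ℝ, 0 < σ →
          (1/c) * σ ^ (1/q) * nrm2 (fun r θ => r ^ (q-2) * g r θ) ≤
            σ * gnrm2 g + nrm2 (fun r θ => r ^ (q-1) * g r θ) := by
  refine ⟨2, le_refl 2, ?_⟩
  intro k hk g hgc hab h1 h2 h3 h4 σ hσ
  obtain ⟨a, b, hg⟩ := hab
  have hgcont : Continuous fun p : ℝ×ℝ => g p.1 p.2 := hgc.continuous
  have hkpos : (0:ℝ) < (k:ℝ) := by exact_mod_cast hk
  have hq0 : (0:ℝ) < q := lt_of_lt_of_le one_pos hq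
  have ha : ∀ r, a r = g r 0 := fun r => by rw [hg r 0]; simp
  have hb : ∀ r, b r = g r (π/(2*k)) := fun r => by
    rw [hg r _]
    have h2k : (k:ℝ) * (π/(2*(k:ℝ))) = π/2 := by
      have : (k:ℝ) ≠ 0 := by positivity
      field_simp
    rw [h2k, Real.cos_pi_div_two, Real.sin_pi_div_two]
    ring
  have hacont : Continuous a := by
    rw [show a = fun r => g r 0 from funext ha]
    exact hgcont.comp (continuous_id.prodMk continuous_const)
  have hbcont : Continuous b := by
    rw [show b = fun r => g r (π/(2*(k:ℝ))) from funext hb]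
    exact hgcont.comp (continuous_id.prodMk continuous_const)
  have mg : Measurable fun p : ℝ×ℝ => g p.1 p.2 := hgcont.measurable
  have hdomM : MeasurableSet domRT := measurableSet_Ioi.prod measurableSet_Ioc
  have haePos : ∀ᵐ p ∂(volume.restrict domRT), 0 < p.1 := by
    filter_upwards [ae_restrict_mem hdomM] with p hp using hp.1
  have mrp : ∀ e : ℝ, Measurable fun p : ℝ×ℝ => p.1 ^ e := fun e => measurable_rpow_const e
  have m1 : Measurable fun p : ℝ×ℝ => (p.1 ^ (q-2) * g p.1 p.2)^2 * p.1 :=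
    (((mrp (q-2)).mul mg).pow_const 2).mul measurable_fst
  -- lintegrals
  set I1 : ENNReal := ∫⁻ p in domRT, ENNReal.ofReal ((p.1 ^ (q-2) * g p.1 p.2)^2 * p.1) with hI1
  set I2 : ENNReal := ∫⁻ p in domRT, ENNReal.ofReal ((g p.1 p.2 / p.1)^2 * p.1) with hI2
  set I3 : ENNReal := ∫⁻ p in domRT, ENNReal.ofReal ((pdt g p.1 p.2 / p.1)^2 * p.1) with hI3
  set I4 : ENNReal := ∫⁻ p in domRT, ENNReal.ofReal ((p.1 ^ (q-1) * g p.1 p.2)^2 * p.1) with hI4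
  have hN1 : nrm2 (fun r θ => r ^ (q-2) * g r θ) = I1.toReal := by
    rw [nrm2, hI1]
    exact integral_eq_lintegral_of_nonneg_ae
      (by filter_upwards [haePos] with p hp using mul_nonneg (sq_nonneg _) hp.le)
      m1.aestronglyMeasurable
  have hN3 : ENNReal.ofReal (nrm2 (fun r θ => pdt g r θ / r)) = I3 := by
    rw [nrm2, hI3]
    exact ofReal_integral_eq_lintegral_ofReal h3
      (by filter_upwards [haePos] with p hp using mul_nonneg (sq_nonneg _) hp.le)
  have hN4 : ENNReal.ofReal (nrm2 (fun r θ => r ^ (q-1) * g r θ)) = I4 := by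
    rw [nrm2, hI4]
    exact ofReal_integral_eq_lintegral_ofReal h4
      (by filter_upwards [haePos] with p hp using mul_nonneg (sq_nonneg _) hp.le)
  have hN3nonneg : 0 ≤ nrm2 (fun r θ => pdt g r θ / r) := by
    rw [nrm2]
    exact integral_nonneg_of_ae
      (by filter_upwards [haePos] with p hp using mul_nonneg (sq_nonneg _) hp.le)
  have hN4nonneg : 0 ≤ nrm2 (fun r θ => r ^ (q-1) * g r θ) := by
    rw [nrm2]
    exact integral_nonneg_of_ae
      (by filter_upwards [haePos] with p hp using mul_nonneg (sq_nonneg _) hp.le)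
  have hNpdr : 0 ≤ nrm2 (pdr g) := by
    rw [nrm2]
    exact integral_nonneg_of_ae
      (by filter_upwards [haePos] with p hp using mul_nonneg (sq_nonneg _) hp.le)
  have hI2I3 : I2 ≤ I3 := fubini_cmp g k hk a b hg hgcont hacont hbcont
  -- Young chain
  have hchain : ENNReal.ofReal (σ^(1/q)) * I1 ≤ ENNReal.ofReal σ * I3 + I4 := by
    have step1 : ENNReal.ofReal (σ^(1/q)) * I1
        = ∫⁻ p in domRT, ENNReal.ofReal (σ^(1/q) * ((p.1 ^ (q-2) * g p.1 p.2)^2 * p.1)) := by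
      rw [hI1, ← lintegral_const_mul' _ _ ENNReal.ofReal_ne_top]
      congr 1
      funext p
      exact (ENNReal.ofReal_mul (by positivity : (0:ℝ) ≤ σ^(1/q))).symm
    have step2 : (∫⁻ p in domRT, ENNReal.ofReal (σ^(1/q) * ((p.1 ^ (q-2) * g p.1 p.2)^2 * p.1)))
        ≤ ∫⁻ p in domRT, (ENNReal.ofReal (σ * ((g p.1 p.2 / p.1)^2 * p.1))
            + ENNReal.ofReal ((p.1 ^ (q-1) * g p.1 p.2)^2 * p.1)) := by
      apply lintegral_mono_ae
      filter_upwards [haePos] with p hp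
      exact le_trans (ENNReal.ofReal_le_ofReal (young_pt q σ p.1 (g p.1 p.2) hq hσ hp))
        ENNReal.ofReal_add_le
    have mσ2 : Measurable fun p : ℝ×ℝ => ENNReal.ofReal (σ * ((g p.1 p.2 / p.1)^2 * p.1)) :=
      ((measurable_const.mul (((mg.div measurable_fst).pow_const 2).mul measurable_fst))).ennreal_ofReal
    have step3 : (∫⁻ p in domRT, (ENNReal.ofReal (σ * ((g p.1 p.2 / p.1)^2 * p.1))
            + ENNReal.ofReal ((p.1 ^ (q-1) * g p.1 p.2)^2 * p.1)))
        = ENNReal.ofReal σ * I2 + I4 := by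
      rw [lintegral_add_left mσ2, hI2, hI4, ← lintegral_const_mul' _ _ ENNReal.ofReal_ne_top]
      congr 2
      funext p
      exact ENNReal.ofReal_mul hσ.le
    calc ENNReal.ofReal (σ^(1/q)) * I1
        = _ := step1
      _ ≤ _ := step2
      _ = ENNReal.ofReal σ * I2 + I4 := step3
      _ ≤ ENNReal.ofReal σ * I3 + I4 := by gcongr
  have hfin : ENNReal.ofReal σ * I3 + I4 ≠ ⊤ :=
    ENNReal.add_ne_top.mpr ⟨ENNReal.mul_ne_top ENNReal.ofReal_ne_top (hN3 ▸ ENNReal.ofReal_ne_top),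
      hN4 ▸ ENNReal.ofReal_ne_top⟩
  have key : σ^(1/q) * nrm2 (fun r θ => r ^ (q-2) * g r θ)
      ≤ σ * nrm2 (fun r θ => pdt g r θ / r) + nrm2 (fun r θ => r ^ (q-1) * g r θ) := by
    have lhs_eq : σ^(1/q) * nrm2 (fun r θ => r ^ (q-2) * g r θ)
        = (ENNReal.ofReal (σ^(1/q)) * I1).toReal := by
      rw [hN1, ENNReal.toReal_mul, ENNReal.toReal_ofReal (by positivity)]
    have rhs_eq : (ENNReal.ofReal σ * I3 + I4).toReal
        = σ * nrm2 (fun r θ => pdt g r θ / r) + nrm2 (fun r θ => r ^ (q-1) * g r θ) := by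
      rw [← hN3, ← hN4, ← ENNReal.ofReal_mul hσ.le,
        ← ENNReal.ofReal_add (mul_nonneg hσ.le hN3nonneg) hN4nonneg,
        ENNReal.toReal_ofReal (add_nonneg (mul_nonneg hσ.le hN3nonneg) hN4nonneg)]
    rw [lhs_eq, ← rhs_eq]
    exact ENNReal.toReal_mono hfin hchain
  have hnn1 : 0 ≤ nrm2 (fun r θ => r ^ (q-2) * g r θ) := by
    rw [hN1]; exact ENNReal.toReal_nonneg
  have hσq : (0:ℝ) ≤ σ^(1/q) := by positivity
  have hgn : nrm2 (fun r θ => pdt g r θ / r) ≤ gnrm2 g := by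
    rw [gnrm2]; linarith
  calc (1/2) * σ^(1/q) * nrm2 (fun r θ => r ^ (q-2) * g r θ)
      ≤ σ^(1/q) * nrm2 (fun r θ => r ^ (q-2) * g r θ) := by nlinarith
    _ ≤ σ * nrm2 (fun r θ => pdt g r θ / r) + nrm2 (fun r θ => r ^ (q-1) * g r θ) := key
    _ ≤ σ * gnrm2 g + nrm2 (fun r θ => r ^ (q-1) * g r θ) := by nlinarith
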